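/- arXiv:2112.00080 — 2 statements merged into one kernel-verified Lean document; each statement's English description precedes it below -/
import Mathlib

section
/- Let H be a Hilbert space, d > 0, α ∈ (0,1), and let u be sufficiently smooth with u'(0) = u₁ ∈ H. Then ∫₀ᵗ ⟨d(∂_s ∂_s^{1+α} u(s) − s^{−α} u₂/Γ(1−α)), ∂_s^{1+α} u(s)⟩ ds ≥ (d/2)‖∂_t^{1+α} u(t)‖² − d t^{2(1−α)} ‖u₂‖²/Γ(2−α)² − (d/4) sup_{s∈(0,t)} ‖∂_s^{1+α} u(s)‖², where u₂ = u''(0). -/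
open MeasureTheory Real Set

/-- Riemann–Liouville fractional integral of order `θ` on `(0,t)`. -/
noncomputable def RL (θ : ℝ) (w : ℝ → ℝ) (t : ℝ) : ℝ :=
  (Real.Gamma θ)⁻¹ * ∫ s in (0:ℝ)..t, (t - s) ^ (θ - 1) * w s

/-- Riemann–Liouville integral, with order `0` interpreted as the identity. -/
noncomputable def RLI (θ : ℝ) (w : ℝ → ℝ) : ℝ → ℝ :=
  if θ = 0 then w else RL θ w

/-- Caputo (Djrbashian–Caputo) fractional derivative of order `β ≥ 0`:
`∂_t^β w = ₀I_t^{⌈β⌉−β} (w^{(⌈β⌉)})`, with integer orders as classical derivatives. -/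
noncomputable def cap (β : ℝ) (w : ℝ → ℝ) : ℝ → ℝ :=
  if β = (⌈β⌉ : ℝ) then deriv^[(⌈β⌉).toNat] w
  else RL ((⌈β⌉ : ℝ) - β) (deriv^[(⌈β⌉).toNat] w)

/-- `L²(0,t)` norm. -/
noncomputable def L2norm (t : ℝ) (w : ℝ → ℝ) : ℝ :=
  (∫ s in (0:ℝ)..t, (w s)^2) ^ (1/2 : ℝ)

/-- Membership in `L²(0,t)`. -/
def MemL2 (t : ℝ) (w : ℝ → ℝ) : Prop :=
  MemLp w 2 (volume.restrict (Set.Ioo 0 t))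

/-- Gagliardo (Sobolev–Slobodeckij) double integral seminorm (squared). -/
noncomputable def gagliardo (θ t : ℝ) (w : ℝ → ℝ) : ℝ :=
  ∫ p in (Set.Ioo (0:ℝ) t) ×ˢ (Set.Ioo (0:ℝ) t),
    (w p.1 - w p.2)^2 / |p.1 - p.2| ^ (1 + 2*θ)

/-- `H^θ(0,t)` norm for `θ ∈ [0,1)`. -/
noncomputable def Hnorm (θ t : ℝ) (w : ℝ → ℝ) : ℝ :=
  if θ = 0 then L2norm t w
  else ((L2norm t w)^2 + gagliardo θ t w) ^ (1/2 : ℝ)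

/-- Membership in `H^θ(0,t)` for `θ ∈ [0,1)`. -/
def MemH (θ t : ℝ) (w : ℝ → ℝ) : Prop :=
  MemL2 t w ∧ (θ ≠ 0 → Integrable
    (fun p : ℝ × ℝ => (w p.1 - w p.2)^2 / |p.1 - p.2| ^ (1 + 2*θ))
    (volume.restrict ((Set.Ioo (0:ℝ) t) ×ˢ (Set.Ioo (0:ℝ) t))))

/-- Dual norm of `H^{-θ}(0,t)`, realized as the dual of `H^θ(0,t)` with `L²` pivot. -/
noncomputable def Hneg (θ t : ℝ) (w : ℝ → ℝ) : ℝ :=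
  ⨆ φ : {φ : ℝ → ℝ // Hnorm θ t φ ≤ 1}, ∫ s in (0:ℝ)..t, w s * φ.1 s

variable {H : Type*} [NormedAddCommGroup H] [NormedSpace ℝ H]

/-- Vector-valued Riemann–Liouville fractional integral. -/
noncomputable def RLv (θ : ℝ) (w : ℝ → H) (t : ℝ) : H :=
  (Real.Gamma θ)⁻¹ • ∫ s in (0:ℝ)..t, ((t - s) ^ (θ - 1)) • w s

/-- Vector-valued Riemann–Liouville integral with order `0` as identity. -/
noncomputable def RLIv (θ : ℝ) (w : ℝ → H) : ℝ → H :=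
  if θ = 0 then w else RLv θ w

/-- Vector-valued Caputo fractional derivative of order `β ≥ 0`. -/
noncomputable def capv (β : ℝ) (w : ℝ → H) : ℝ → H :=
  if β = (⌈β⌉ : ℝ) then deriv^[(⌈β⌉).toNat] w
  else RLv ((⌈β⌉ : ℝ) - β) (deriv^[(⌈β⌉).toNat] w)

/-- `L²(0,t;H)` norm. -/
noncomputable def L2normV (t : ℝ) (w : ℝ → H) : ℝ :=
  (∫ s in (0:ℝ)..t, ‖w s‖^2) ^ (1/2 : ℝ)

/-- Vector-valued Gagliardo seminorm (squared). -/
noncomputable def gagliardoV (θ t : ℝ) (w : ℝ → H) : ℝ :=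
  ∫ p in (Set.Ioo (0:ℝ) t) ×ˢ (Set.Ioo (0:ℝ) t),
    ‖w p.1 - w p.2‖^2 / |p.1 - p.2| ^ (1 + 2*θ)

/-- Fractional Sobolev–Bochner norm `H^s(0,t;H)`, `s ≥ 0`. -/
noncomputable def HnormV (s t : ℝ) (w : ℝ → H) : ℝ :=
  if s = (⌊s⌋ : ℝ) then
    (∑ k ∈ Finset.range ((⌊s⌋).toNat + 1), (L2normV t (deriv^[k] w))^2) ^ (1/2 : ℝ)
  else
    ((∑ k ∈ Finset.range ((⌊s⌋).toNat + 1), (L2normV t (deriv^[k] w))^2)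
      + gagliardoV (s - ⌊s⌋) t (deriv^[(⌊s⌋).toNat] w)) ^ (1/2 : ℝ)

/-- Membership in `H^s(0,t;H)`. -/
def MemHV (s t : ℝ) (w : ℝ → H) : Prop :=
  (∀ k ≤ (⌊s⌋).toNat, MemLp (deriv^[k] w) 2 (volume.restrict (Set.Ioo (0:ℝ) t))) ∧
  (s ≠ (⌊s⌋ : ℝ) → Integrable
    (fun p : ℝ × ℝ => ‖deriv^[(⌊s⌋).toNat] w p.1 - deriv^[(⌊s⌋).toNat] w p.2‖^2
      / |p.1 - p.2| ^ (1 + 2*(s - ⌊s⌋)))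
    (volume.restrict ((Set.Ioo (0:ℝ) t) ×ˢ (Set.Ioo (0:ℝ) t))))


section EnergyHelpers
open intervalIntegral
variable {H : Type*} [NormedAddCommGroup H] [InnerProductSpace ℝ H] [CompleteSpace H]

lemma ker_int {α : ℝ} (hα1 : α < 1) :
    IntervalIntegrable (fun σ : ℝ => (1-σ)^(-α)) volume (0:ℝ) 1 := by
  have h : IntervalIntegrable (fun x : ℝ => x ^ (-α)) volume (0:ℝ) 1 :=
    intervalIntegrable_rpow' (by linarith)
  simpa using (h.comp_sub_left 1).symm

lemma ker_smul_meas {α : ℝ} {g : ℝ → H} (hg : Continuous g) :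
    AEStronglyMeasurable (fun σ : ℝ => ((1-σ:ℝ)^(-α)) • g σ)
      (volume.restrict (Set.uIoc (0:ℝ) 1)) := by
  exact ((((measurable_const.sub measurable_id).pow measurable_const).stronglyMeasurable.smul
    hg.stronglyMeasurable).aestronglyMeasurable)

lemma ker_smul_int {α : ℝ} (hα1 : α < 1) {g : ℝ → H} (hg : Continuous g) :
    IntervalIntegrable (fun σ : ℝ => ((1-σ:ℝ)^(-α)) • g σ) volume (0:ℝ) 1 := by
  obtain ⟨M, hM⟩ := (isCompact_Icc (a := (0:ℝ)) (b := 1)).exists_bound_of_continuousOn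
    hg.continuousOn
  refine ((ker_int hα1).mul_const M).mono_fun (ker_smul_meas hg) ?_
  rw [Filter.EventuallyLE, ae_restrict_iff' measurableSet_uIoc]
  refine Filter.Eventually.of_forall (fun σ hσ => ?_)
  rw [uIoc_of_le zero_le_one] at hσ
  have h1 : (0:ℝ) ≤ (1-σ)^(-α) := Real.rpow_nonneg (by linarith [hσ.2]) _
  have : ‖((1-σ:ℝ)^(-α)) • g σ‖ = (1-σ)^(-α) * ‖g σ‖ := by
    rw [norm_smul, Real.norm_eq_abs, abs_of_nonneg h1]
  rw [Real.norm_eq_abs, this]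
  calc (1-σ:ℝ)^(-α) * ‖g σ‖ ≤ (1-σ)^(-α) * M :=
        mul_le_mul_of_nonneg_left (hM _ ⟨hσ.1.le, hσ.2⟩) h1
    _ ≤ |(1-σ:ℝ)^(-α) * M| := le_abs_self _

lemma Phi_hasDerivAt {α : ℝ} (hα1 : α < 1) {w : ℝ → H} (hw : ContDiff ℝ 1 w) (s : ℝ) :
    HasDerivAt (fun x : ℝ => ∫ σ in (0:ℝ)..1, ((1-σ:ℝ)^(-α)) • w (x*σ))
      (∫ σ in (0:ℝ)..1, ((1-σ:ℝ)^(-α)) • (σ • deriv w (s*σ))) s := by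
  have hw' : Continuous (deriv w) := hw.continuous_deriv le_rfl
  obtain ⟨M, hM⟩ := (isCompact_Icc (a := -(|s|+1)) (b := |s|+1)).exists_bound_of_continuousOn
    hw'.continuousOn
  refine (intervalIntegral.hasDerivAt_integral_of_dominated_loc_of_deriv_le
    (F := fun x σ => ((1-σ:ℝ)^(-α)) • w (x*σ))
    (F' := fun x σ => ((1-σ:ℝ)^(-α)) • (σ • deriv w (x*σ)))
    (bound := fun σ => ((1-σ:ℝ)^(-α)) * max M 0)
    (Metric.ball_mem_nhds s zero_lt_one) ?_ ?_ ?_ ?_ ?_ ?_).2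
  · exact Filter.Eventually.of_forall fun x =>
      ker_smul_meas (hw.continuous.comp (continuous_const.mul continuous_id))
  · exact ker_smul_int hα1 (hw.continuous.comp (continuous_const.mul continuous_id))
  · exact ker_smul_meas ((continuous_id.smul (hw'.comp (continuous_const.mul continuous_id))))
  · refine Filter.Eventually.of_forall fun σ hσ x hx => ?_
    rw [uIoc_of_le zero_le_one] at hσ
    have h1 : (0:ℝ) ≤ (1-σ)^(-α) := Real.rpow_nonneg (by linarith [hσ.2]) _
    have hxs : |x * σ| ≤ |s| + 1 := by
      rw [Metric.mem_ball, Real.dist_eq] at hx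
      have : |x| ≤ |s| + 1 := by
        have := abs_sub_abs_le_abs_sub x s
        linarith [hx.le]
      calc |x * σ| = |x| * |σ| := abs_mul _ _
        _ ≤ (|s|+1) * 1 := by
            apply mul_le_mul this _ (abs_nonneg _) (by positivity)
            rw [abs_of_nonneg hσ.1.le]; exact hσ.2
        _ = |s| + 1 := mul_one _
    have hMx : ‖deriv w (x*σ)‖ ≤ max M 0 :=
      le_trans (hM _ (abs_le.mp hxs)) (le_max_left _ _)
    rw [norm_smul, norm_smul, Real.norm_eq_abs, abs_of_nonneg h1, Real.norm_eq_abs]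
    refine mul_le_mul_of_nonneg_left ?_ h1
    calc |σ| * ‖deriv w (x*σ)‖ ≤ 1 * max M 0 := by
          apply mul_le_mul _ hMx (norm_nonneg _) zero_le_one
          rw [abs_of_nonneg hσ.1.le]; exact hσ.2
      _ = max M 0 := one_mul _
  · exact (ker_int hα1).mul_const _
  · refine Filter.Eventually.of_forall fun σ _ x _ => ?_
    have : HasDerivAt (fun x : ℝ => w (x * σ)) (σ • deriv w (x*σ)) x := by
      have h2 : HasDerivAt (fun x : ℝ => x * σ) σ x := hasDerivAt_mul_const σ
      exact ((hw.differentiable one_ne_zero (x*σ)).hasDerivAt.scomp (x := x) h2)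
    exact this.const_smul _

lemma Phi'_continuous {α : ℝ} (hα1 : α < 1) {w : ℝ → H} (hw : ContDiff ℝ 1 w) :
    Continuous (fun x : ℝ => ∫ σ in (0:ℝ)..1, ((1-σ:ℝ)^(-α)) • (σ • deriv w (x*σ))) := by
  have hw' : Continuous (deriv w) := hw.continuous_deriv le_rfl
  rw [continuous_iff_continuousAt]
  intro s
  obtain ⟨M, hM⟩ := (isCompact_Icc (a := -(|s|+1)) (b := |s|+1)).exists_bound_of_continuousOn
    hw'.continuousOn
  refine continuousAt_of_dominated_interval
    (bound := fun σ => ((1-σ:ℝ)^(-α)) * max M 0) ?_ ?_ ?_ ?_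
  · exact Filter.Eventually.of_forall fun x =>
      ker_smul_meas ((continuous_id.smul (hw'.comp (continuous_const.mul continuous_id))))
  · refine Filter.eventually_iff_exists_mem.2 ⟨Metric.ball s 1, Metric.ball_mem_nhds s zero_lt_one,
      fun x hx => Filter.Eventually.of_forall fun σ hσ => ?_⟩
    rw [uIoc_of_le zero_le_one] at hσ
    have h1 : (0:ℝ) ≤ (1-σ)^(-α) := Real.rpow_nonneg (by linarith [hσ.2]) _
    have hxs : |x * σ| ≤ |s| + 1 := by
      rw [Metric.mem_ball, Real.dist_eq] at hx
      have : |x| ≤ |s| + 1 := by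
        have := abs_sub_abs_le_abs_sub x s
        linarith [hx.le]
      calc |x * σ| = |x| * |σ| := abs_mul _ _
        _ ≤ (|s|+1) * 1 := by
            apply mul_le_mul this _ (abs_nonneg _) (by positivity)
            rw [abs_of_nonneg hσ.1.le]; exact hσ.2
        _ = |s| + 1 := mul_one _
    have hMx : ‖deriv w (x*σ)‖ ≤ max M 0 :=
      le_trans (hM _ (abs_le.mp hxs)) (le_max_left _ _)
    rw [norm_smul, norm_smul, Real.norm_eq_abs, abs_of_nonneg h1, Real.norm_eq_abs]
    refine mul_le_mul_of_nonneg_left ?_ h1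
    calc |σ| * ‖deriv w (x*σ)‖ ≤ 1 * max M 0 := by
          apply mul_le_mul _ hMx (norm_nonneg _) zero_le_one
          rw [abs_of_nonneg hσ.1.le]; exact hσ.2
      _ = max M 0 := one_mul _
  · exact (ker_int hα1).mul_const _
  · refine Filter.Eventually.of_forall fun σ _ => ?_
    exact (continuous_const.smul (continuous_const.smul
      (hw'.comp (continuous_id.mul continuous_const)))).continuousAt

lemma repr_change {α : ℝ} {w : ℝ → H} {s : ℝ} (hs : 0 < s) :
    (∫ r in (0:ℝ)..s, ((s-r:ℝ)^(-α)) • w r)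
      = (s^(1-α:ℝ)) • ∫ σ in (0:ℝ)..1, ((1-σ:ℝ)^(-α)) • w (s*σ) := by
  have h1 : ∀ σ ∈ uIcc (0:ℝ) 1,
      ((1-σ:ℝ)^(-α)) • w (s*σ) = (s^(α:ℝ)) • (((s - s*σ:ℝ)^(-α)) • w (s*σ)) := by
    intro σ hσ
    rw [uIcc_of_le zero_le_one] at hσ
    rw [smul_smul]
    congr 1
    have : s - s*σ = s * (1-σ) := by ring
    rw [this, Real.mul_rpow hs.le (by linarith [hσ.2]), ← mul_assoc,
      ← Real.rpow_add hs]
    norm_num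
  have h2 : (∫ σ in (0:ℝ)..1, ((1-σ:ℝ)^(-α)) • w (s*σ))
      = (s^(α:ℝ)) • ∫ σ in (0:ℝ)..1, ((s - s*σ:ℝ)^(-α)) • w (s*σ) := by
    rw [integral_congr h1, intervalIntegral.integral_smul]
  have h3 : (∫ σ in (0:ℝ)..1, ((s - s*σ:ℝ)^(-α)) • w (s*σ))
      = s⁻¹ • ∫ r in (0:ℝ)..s, ((s-r:ℝ)^(-α)) • w r := by
    have := integral_comp_mul_left (a := (0:ℝ)) (b := 1)
      (f := fun r => ((s-r:ℝ)^(-α)) • w r) (c := s) hs.ne'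
    simpa using this
  rw [h2, h3, smul_smul, smul_smul, ← Real.rpow_add hs]
  have : (1 - α + α : ℝ) = 1 := by ring
  rw [this, Real.rpow_one, mul_inv_cancel₀ hs.ne', one_smul]

end EnergyHelpers

set_option maxHeartbeats 1000000
open intervalIntegral in

open scoped RealInnerProductSpace in
/-- Lower bound for the leading-order testing term: in a Hilbert space `H`, for `d > 0`,
`α ∈ (0,1)` and sufficiently smooth `u` with `u'(0) = u₁`, `u''(0) = u₂`,
`∫₀ᵗ ⟨d(∂_s ∂_s^{1+α}u − s^{-α}u₂/Γ(1-α)), ∂_s^{1+α}u⟩ ds ≥ (d/2)‖∂_t^{1+α}u(t)‖²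
 − d t^{2(1-α)}‖u₂‖²/Γ(2-α)² − (d/4) sup_{s∈(0,t)}‖∂_s^{1+α}u(s)‖²`. -/
theorem energy_testing_lower_bound {H : Type*} [NormedAddCommGroup H]
    [InnerProductSpace ℝ H] [CompleteSpace H]
    (d α t : ℝ) (hd : 0 < d) (hα : α ∈ Set.Ioo (0:ℝ) 1) (ht : 0 < t)
    (u : ℝ → H) (hu : ContDiff ℝ 3 u) (u₁ u₂ : H)
    (h1 : deriv u 0 = u₁) (h2 : deriv^[2] u 0 = u₂) :
    (∫ s in (0:ℝ)..t,
        ⟪d • (deriv (capv (1+α) u) s - (s^(-α) / Real.Gamma (1-α)) • u₂),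
          capv (1+α) u s⟫) ≥
      d/2 * ‖capv (1+α) u t‖^2
        - d * t^(2*(1-α)) * ‖u₂‖^2 / (Real.Gamma (2-α))^2
        - d/4 * ⨆ s ∈ Set.Ioo (0:ℝ) t, ‖capv (1+α) u s‖^2 := by
  
  obtain ⟨hα0, hα1⟩ := hα
  have hΓpos : 0 < Real.Gamma (1-α) := Real.Gamma_pos_of_pos (by linarith)
  set w : ℝ → H := deriv^[2] u with hwdef
  have hw : ContDiff ℝ 1 w := by
    apply ContDiff.iterate_deriv' 1 2
    exact_mod_cast hu
  set Φ : ℝ → H := fun x => ∫ σ in (0:ℝ)..1, ((1-σ:ℝ)^(-α)) • w (x*σ) with hΦdef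
  set Φ' : ℝ → H := fun x => ∫ σ in (0:ℝ)..1, ((1-σ:ℝ)^(-α)) • (σ • deriv w (x*σ)) with hΦ'def
  have hΦd : ∀ s, HasDerivAt Φ (Φ' s) s := fun s => Phi_hasDerivAt hα1 hw s
  have hΦc : Continuous Φ := continuous_iff_continuousAt.2 fun s => (hΦd s).continuousAt
  have hΦ'c : Continuous Φ' := Phi'_continuous hα1 hw
  set c := (Real.Gamma (1-α))⁻¹ with hcdef
  set V : ℝ → H := fun s => c • ((s^(1-α:ℝ)) • Φ s) with hVdef
  set V' : ℝ → H := fun s => c • ((((1-α) * s^(-α:ℝ))) • Φ s + (s^(1-α:ℝ)) • Φ' s) with hV'def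
  have hcapv : capv (1+α) u = fun s => c • ∫ r in (0:ℝ)..s, ((s - r:ℝ)^(-α)) • w r := by
    have hceil : (⌈(1:ℝ)+α⌉ : ℤ) = 2 := by
      rw [add_comm, Int.ceil_add_one]
      have : (⌈α⌉ : ℤ) = 1 := Int.ceil_eq_iff.2 (by push_cast; constructor <;> linarith)
      omega
    have hne : ¬ ((1:ℝ)+α = (⌈(1:ℝ)+α⌉ : ℝ)) := by
      rw [hceil]; push_cast; intro h; linarith
    rw [capv, if_neg hne, hceil]
    funext s
    show RLv ((2:ℤ) - (1+α)) (deriv^[Int.toNat 2] u) s = _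
    rw [RLv]
    have he : ((2:ℤ):ℝ) - (1+α) = 1 - α := by push_cast; ring
    rw [he]
    norm_num
    rfl
  have hVeq : ∀ s : ℝ, 0 ≤ s → capv (1+α) u s = V s := by
    intro s hs
    rcases hs.lt_or_eq with h|h
    · rw [hcapv]
      show c • _ = _
      rw [repr_change h]
    · rw [← h, hcapv]
      have hz : ((0:ℝ))^((1:ℝ)-α) = 0 :=
        Real.zero_rpow (ne_of_gt (by linarith : (0:ℝ) < 1-α))
      show c • (∫ r in (0:ℝ)..0, ((0 - r:ℝ)^(-α)) • w r) = V 0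
      rw [intervalIntegral.integral_same, hVdef]
      simp [hz]
  have hrpow1c : Continuous (fun s : ℝ => s^(1-α:ℝ)) := by
    rw [continuous_iff_continuousAt]
    intro s
    exact Real.continuousAt_rpow_const s _ (Or.inr (by linarith))
  have hVc : Continuous V := continuous_const.smul (hrpow1c.smul hΦc)
  have hVd : ∀ s : ℝ, 0 < s → HasDerivAt V (V' s) s := by
    intro s hs
    have h1 : HasDerivAt (fun x : ℝ => x^(1-α:ℝ)) ((1-α) * s^(-α:ℝ)) s := by
      have := Real.hasDerivAt_rpow_const (x := s) (p := 1-α) (Or.inl hs.ne')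
      convert this using 2
      ring_nf
    exact ((h1.smul (hΦd s)).const_smul c).congr_deriv (by module)
  -- bounds
  obtain ⟨MΦ, hMΦ⟩ := (isCompact_Icc (a := (0:ℝ)) (b := t)).exists_bound_of_continuousOn
    hΦc.continuousOn
  obtain ⟨MΦ', hMΦ'⟩ := (isCompact_Icc (a := (0:ℝ)) (b := t)).exists_bound_of_continuousOn
    hΦ'c.continuousOn
  obtain ⟨MV, hMV⟩ := (isCompact_Icc (a := (0:ℝ)) (b := t)).exists_bound_of_continuousOn
    hVc.continuousOn
  have hcpos : 0 < c := inv_pos.2 hΓpos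
  set A := c * ((1-α) * max MΦ 0) with hA
  set B := c * (t^((1:ℝ)-α) * max MΦ' 0) with hB
  have hV'bd : ∀ s ∈ Set.Ioc (0:ℝ) t, ‖V' s‖ ≤ A * s^(-α:ℝ) + B := by
    intro s hs
    have hsp : (0:ℝ) ≤ s ^ (-α:ℝ) := Real.rpow_nonneg hs.1.le _
    have hb1 : ‖Φ s‖ ≤ max MΦ 0 := le_trans (hMΦ s ⟨hs.1.le, hs.2⟩) (le_max_left _ _)
    have hb2 : ‖Φ' s‖ ≤ max MΦ' 0 := le_trans (hMΦ' s ⟨hs.1.le, hs.2⟩) (le_max_left _ _)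
    have hb3 : s^((1:ℝ)-α) ≤ t^((1:ℝ)-α) := Real.rpow_le_rpow hs.1.le hs.2 (by linarith)
    have hb4 : (0:ℝ) ≤ s^((1:ℝ)-α) := Real.rpow_nonneg hs.1.le _
    calc ‖V' s‖ ≤ c * (((1-α) * s^(-α:ℝ)) * ‖Φ s‖ + s^((1:ℝ)-α) * ‖Φ' s‖) := by
          rw [hV'def]
          simp only []
          rw [norm_smul, Real.norm_eq_abs, abs_of_nonneg hcpos.le]
          apply mul_le_mul_of_nonneg_left _ hcpos.le
          refine le_trans (norm_add_le _ _) ?_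
          rw [norm_smul, norm_smul, Real.norm_eq_abs, Real.norm_eq_abs,
            abs_of_nonneg (mul_nonneg (by linarith) hsp), abs_of_nonneg hb4]
      _ ≤ A * s^(-α:ℝ) + B := by
          rw [hA, hB]
          have h5 : ((1-α) * s^(-α:ℝ)) * ‖Φ s‖ ≤ ((1-α) * s^(-α:ℝ)) * max MΦ 0 :=
            mul_le_mul_of_nonneg_left hb1 (mul_nonneg (by linarith) hsp)
          have h6 : s^((1:ℝ)-α) * ‖Φ' s‖ ≤ t^((1:ℝ)-α) * max MΦ' 0 :=
            mul_le_mul hb3 hb2 (norm_nonneg _) (Real.rpow_nonneg ht.le _)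
          nlinarith [hcpos.le]
  have hVbd : ∀ s ∈ Set.Icc (0:ℝ) t, ‖V s‖ ≤ max MV 0 :=
    fun s hs => le_trans (hMV s hs) (le_max_left _ _)
  -- integrability
  have hrpow_int : IntervalIntegrable (fun s : ℝ => s ^ (-α:ℝ)) volume 0 t :=
    intervalIntegrable_rpow' (by linarith)
  have hV'meas : AEStronglyMeasurable V' (volume.restrict (Set.uIoc (0:ℝ) t)) := by
    refine StronglyMeasurable.aestronglyMeasurable ?_
    apply StronglyMeasurable.const_smul
    exact ((((measurable_id.pow measurable_const).const_mul
      (1-α)).stronglyMeasurable.smul hΦc.stronglyMeasurable).add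
      ((measurable_id.pow measurable_const).stronglyMeasurable.smul
        hΦ'c.stronglyMeasurable))
  have hI1 : IntervalIntegrable (fun s => (⟪V' s, V s⟫ : ℝ)) volume 0 t := by
    have hbnd_int : IntervalIntegrable
        (fun s : ℝ => (A * s^(-α:ℝ) + B) * max MV 0) volume 0 t :=
      ((hrpow_int.const_mul A).add intervalIntegrable_const).mul_const _
    refine hbnd_int.mono_fun' (hV'meas.inner hVc.aestronglyMeasurable) ?_
    rw [Filter.EventuallyLE, ae_restrict_iff' measurableSet_uIoc]
    refine Filter.Eventually.of_forall (fun s hs => ?_)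
    rw [uIoc_of_le ht.le] at hs
    calc ‖(⟪V' s, V s⟫ : ℝ)‖ ≤ ‖V' s‖ * ‖V s‖ := norm_inner_le_norm _ _
      _ ≤ (A * s^(-α:ℝ) + B) * max MV 0 :=
          mul_le_mul (hV'bd s hs) (hVbd s ⟨hs.1.le, hs.2⟩) (norm_nonneg _)
            (le_trans (norm_nonneg (V' s)) (hV'bd s hs))
  have hI2 : IntervalIntegrable
      (fun s => s^(-α:ℝ)/Real.Gamma (1-α) * (⟪u₂, V s⟫ : ℝ)) volume 0 t := by
    have hbnd_int : IntervalIntegrable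
        (fun s : ℝ => s^(-α:ℝ) * (c * (‖u₂‖ * max MV 0))) volume 0 t :=
      hrpow_int.mul_const _
    refine hbnd_int.mono_fun' ?_ ?_
    · exact (((measurable_id.pow measurable_const).div_const _).stronglyMeasurable.mul
        ((continuous_const.inner hVc).stronglyMeasurable)).aestronglyMeasurable
    rw [Filter.EventuallyLE, ae_restrict_iff' measurableSet_uIoc]
    refine Filter.Eventually.of_forall (fun s hs => ?_)
    rw [uIoc_of_le ht.le] at hs
    have hsp : (0:ℝ) ≤ s ^ (-α:ℝ) := Real.rpow_nonneg hs.1.le _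
    have h7 : ‖(⟪u₂, V s⟫ : ℝ)‖ ≤ ‖u₂‖ * max MV 0 :=
      le_trans (norm_inner_le_norm _ _)
        (mul_le_mul_of_nonneg_left (hVbd s ⟨hs.1.le, hs.2⟩) (norm_nonneg _))
    calc ‖s^(-α:ℝ)/Real.Gamma (1-α) * (⟪u₂, V s⟫ : ℝ)‖
        = s^(-α:ℝ) * c * ‖(⟪u₂, V s⟫ : ℝ)‖ := by
          rw [norm_mul, Real.norm_eq_abs (s^(-α:ℝ)/_), abs_of_nonneg (by positivity),
            div_eq_mul_inv, hcdef]
      _ ≤ s^(-α:ℝ) * (c * (‖u₂‖ * max MV 0)) := by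
          rw [mul_assoc]
          exact mul_le_mul_of_nonneg_left
            (mul_le_mul_of_nonneg_left h7 hcpos.le) hsp
  -- FTC
  have hV0 : V 0 = 0 := by
    rw [hVdef]
    simp [Real.zero_rpow (ne_of_gt (by linarith : (0:ℝ) < 1-α))]
  have hFTC : (∫ s in (0:ℝ)..t, (⟪V' s, V s⟫ : ℝ)) = ‖V t‖^2/2 := by
    have key := intervalIntegral.integral_eq_sub_of_hasDeriv_right_of_le ht.le
      (f := fun s => (⟪V s, V s⟫ : ℝ)/2) (f' := fun s => (⟪V' s, V s⟫ : ℝ))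
      ((hVc.inner hVc).div_const 2).continuousOn ?_ hI1
    · rw [key]
      simp [hV0, real_inner_self_eq_norm_sq]
    · intro x hx
      have hder := ((hVd x hx.1).inner (𝕜 := ℝ) (hVd x hx.1)).div_const 2
      have heq : ((⟪V x, V' x⟫ : ℝ) + ⟪V' x, V x⟫)/2 = (⟪V' x, V x⟫ : ℝ) := by
        rw [real_inner_comm]; ring
      rw [heq] at hder
      exact hder.hasDerivWithinAt
  -- a.e. rewriting of the integrand
  have hne_t : ∀ᵐ s : ℝ ∂volume, s ≠ t := by
    refine MeasureTheory.ae_iff.2 ?_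
    simpa using MeasureTheory.measure_singleton t
  have hne_0 : ∀ᵐ s : ℝ ∂volume, s ≠ 0 := by
    refine MeasureTheory.ae_iff.2 ?_
    simpa using MeasureTheory.measure_singleton (0:ℝ)
  have hcongr : (∫ s in (0:ℝ)..t,
        (⟪d • (deriv (capv (1+α) u) s - (s^(-α) / Real.Gamma (1-α)) • u₂),
          capv (1+α) u s⟫ : ℝ))
      = d * (∫ s in (0:ℝ)..t, (⟪V' s, V s⟫ : ℝ))
        - d * ∫ s in (0:ℝ)..t, s^(-α:ℝ)/Real.Gamma (1-α) * (⟪u₂, V s⟫ : ℝ) := by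
    rw [← intervalIntegral.integral_const_mul, ← intervalIntegral.integral_const_mul,
      ← intervalIntegral.integral_sub (hI1.const_mul d) (hI2.const_mul d)]
    apply intervalIntegral.integral_congr_ae
    filter_upwards [hne_t] with s hst hs
    rw [uIoc_of_le ht.le] at hs
    have hsIoo : s ∈ Set.Ioo (0:ℝ) t := ⟨hs.1, lt_of_le_of_ne hs.2 hst⟩
    have hev : capv (1+α) u =ᶠ[nhds s] V :=
      Filter.eventuallyEq_of_mem (Ioi_mem_nhds hsIoo.1) (fun y hy => hVeq y (le_of_lt hy))
    have hdc : deriv (capv (1+α) u) s = V' s :=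
      ((hVd s hsIoo.1).congr_of_eventuallyEq hev).deriv
    rw [hdc, hVeq s hsIoo.1.le]
    simp only [inner_sub_left, real_inner_smul_left]
    ring
  -- the supremum
  set Ssup := ⨆ s ∈ Set.Ioo (0:ℝ) t, ‖capv (1+α) u s‖^2 with hSdef
  have hFle : ∀ s : ℝ, (⨆ _ : s ∈ Set.Ioo (0:ℝ) t, ‖capv (1+α) u s‖^2)
      ≤ max MV 0 ^ 2 := by
    intro s
    by_cases hs : s ∈ Set.Ioo (0:ℝ) t
    · rw [ciSup_pos hs, hVeq s hs.1.le]
      have h8 := hVbd s ⟨hs.1.le, hs.2.le⟩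
      nlinarith [norm_nonneg (V s)]
    · rw [ciSup_neg hs, Real.sSup_empty]
      positivity
  have hbdd : BddAbove (Set.range
      fun s => ⨆ _ : s ∈ Set.Ioo (0:ℝ) t, ‖capv (1+α) u s‖^2) :=
    ⟨max MV 0 ^ 2, Set.forall_mem_range.mpr hFle⟩
  have hle_S : ∀ s ∈ Set.Ioo (0:ℝ) t, ‖capv (1+α) u s‖^2 ≤ Ssup := by
    intro s hs
    have h9 := le_ciSup hbdd s
    rwa [ciSup_pos hs] at h9
  have hS0 : 0 ≤ Ssup :=
    le_trans (sq_nonneg _) (hle_S (t/2) ⟨half_pos ht, half_lt_self ht⟩)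
  set S := Real.sqrt Ssup with hSs
  have hS2 : S^2 = Ssup := Real.sq_sqrt hS0
  have hSnn : 0 ≤ S := Real.sqrt_nonneg _
  have hVleS : ∀ s ∈ Set.Ioo (0:ℝ) t, ‖V s‖ ≤ S := by
    intro s hs
    have h10 := hle_S s hs
    rw [hVeq s hs.1.le] at h10
    exact (Real.le_sqrt (norm_nonneg _) hS0).2 h10
  -- Gamma identities
  have hΓ2 : Real.Gamma (2-α) = (1-α) * Real.Gamma (1-α) := by
    have h11 := Real.Gamma_add_one (ne_of_gt (by linarith : (0:ℝ) < 1-α))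
    rw [show (1:ℝ)-α+1 = 2-α by ring] at h11
    exact h11
  have hΓ2pos : 0 < Real.Gamma (2-α) := Real.Gamma_pos_of_pos (by linarith)
  -- estimate of the source term
  have hEbound : (∫ s in (0:ℝ)..t, s^(-α:ℝ)/Real.Gamma (1-α) * (⟪u₂, V s⟫ : ℝ))
      ≤ ‖u₂‖ * S * t^((1:ℝ)-α) / Real.Gamma (2-α) := by
    have hgint : IntervalIntegrable
        (fun s : ℝ => s^(-α:ℝ) * (‖u₂‖ * S / Real.Gamma (1-α))) volume 0 t :=
      hrpow_int.mul_const _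
    have hae : (fun s : ℝ => s^(-α:ℝ)/Real.Gamma (1-α) * (⟪u₂, V s⟫ : ℝ))
        ≤ᵐ[volume.restrict (Set.Icc (0:ℝ) t)]
        (fun s : ℝ => s^(-α:ℝ) * (‖u₂‖ * S / Real.Gamma (1-α))) := by
      filter_upwards [MeasureTheory.ae_restrict_mem (measurableSet_Icc (a := (0:ℝ)) (b := t)),
        MeasureTheory.ae_restrict_of_ae (hne_t.and hne_0)] with s hsIcc hsne
      have hsIoo : s ∈ Set.Ioo (0:ℝ) t :=
        ⟨lt_of_le_of_ne hsIcc.1 (Ne.symm hsne.2), lt_of_le_of_ne hsIcc.2 hsne.1⟩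
      have hsp : (0:ℝ) ≤ s^(-α:ℝ) := Real.rpow_nonneg hsIoo.1.le _
      have h12 : (⟪u₂, V s⟫ : ℝ) ≤ ‖u₂‖ * S :=
        le_trans (real_inner_le_norm _ _)
          (mul_le_mul_of_nonneg_left (hVleS s hsIoo) (norm_nonneg _))
      calc s^(-α:ℝ)/Real.Gamma (1-α) * (⟪u₂, V s⟫ : ℝ)
          ≤ s^(-α:ℝ)/Real.Gamma (1-α) * (‖u₂‖ * S) :=
            mul_le_mul_of_nonneg_left h12 (by positivity)
        _ = s^(-α:ℝ) * (‖u₂‖ * S / Real.Gamma (1-α)) := by ring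
    have hmono := intervalIntegral.integral_mono_ae_restrict ht.le hI2 hgint hae
    have hint : (∫ s in (0:ℝ)..t, s^(-α:ℝ)) = t^((1:ℝ)-α)/(1-α) := by
      rw [integral_rpow (Or.inl (by linarith))]
      rw [Real.zero_rpow (ne_of_gt (by linarith : (0:ℝ) < -α+1))]
      rw [show -α+1 = (1:ℝ)-α by ring, sub_zero]
    calc (∫ s in (0:ℝ)..t, s^(-α:ℝ)/Real.Gamma (1-α) * (⟪u₂, V s⟫ : ℝ))
        ≤ ∫ s in (0:ℝ)..t, s^(-α:ℝ) * (‖u₂‖ * S / Real.Gamma (1-α)) := hmono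
      _ = (∫ s in (0:ℝ)..t, s^(-α:ℝ)) * (‖u₂‖ * S / Real.Gamma (1-α)) :=
          intervalIntegral.integral_mul_const _ _
      _ = ‖u₂‖ * S * t^((1:ℝ)-α) / Real.Gamma (2-α) := by
          rw [hint, hΓ2]
          field_simp
  -- Young inequality
  have hK2 : (t^((1:ℝ)-α))^2 = t^(2*(1-α)) := by
    rw [← Real.rpow_natCast (t^((1:ℝ)-α)) 2, ← Real.rpow_mul ht.le]
    norm_num
    rw [mul_comm]
  have hyoung : ‖u₂‖ * S * t^((1:ℝ)-α) / Real.Gamma (2-α)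
      ≤ t^(2*(1-α)) * ‖u₂‖^2 / (Real.Gamma (2-α))^2 + Ssup/4 := by
    have hq : (0:ℝ) ≤ t^((1:ℝ)-α) / Real.Gamma (2-α) := by positivity
    have hqq : (t^((1:ℝ)-α) / Real.Gamma (2-α))^2
        = t^(2*(1-α)) / (Real.Gamma (2-α))^2 := by
      rw [div_pow, hK2]
    have hy : ‖u₂‖ * S * (t^((1:ℝ)-α) / Real.Gamma (2-α))
        ≤ (t^((1:ℝ)-α) / Real.Gamma (2-α))^2 * ‖u₂‖^2 + S^2/4 := by
      nlinarith [sq_nonneg ((t^((1:ℝ)-α) / Real.Gamma (2-α)) * ‖u₂‖ - S/2)]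
    rw [hqq, hS2] at hy
    calc ‖u₂‖ * S * t^((1:ℝ)-α) / Real.Gamma (2-α)
        = ‖u₂‖ * S * (t^((1:ℝ)-α) / Real.Gamma (2-α)) := by ring
      _ ≤ t^(2*(1-α)) / (Real.Gamma (2-α))^2 * ‖u₂‖^2 + Ssup/4 := hy
      _ = t^(2*(1-α)) * ‖u₂‖^2 / (Real.Gamma (2-α))^2 + Ssup/4 := by ring
  -- conclusion
  rw [ge_iff_le, hcongr, hFTC, hVeq t ht.le]
  have hcomb : (∫ s in (0:ℝ)..t, s^(-α:ℝ)/Real.Gamma (1-α) * (⟪u₂, V s⟫ : ℝ))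
      ≤ t^(2*(1-α)) * ‖u₂‖^2 / (Real.Gamma (2-α))^2 + Ssup/4 :=
    le_trans hEbound hyoung
  have h13 := mul_le_mul_of_nonneg_left hcomb hd.le
  have h14 : d * (t^(2*(1-α)) * ‖u₂‖^2 / (Real.Gamma (2-α))^2 + Ssup/4)
      = d * t^(2*(1-α)) * ‖u₂‖^2 / (Real.Gamma (2-α))^2 + d/4 * Ssup := by ring
  rw [h14] at h13
  linarith
end

section
/- Let H be a Hilbert space, b > 0, α ∈ (0,1), and u with ∂_t^α Ã^{1/2}u(0) = 0 and sufficient regularity. Then sup_{t'∈(0,t)} ∫₀^{t'} ⟨b ∂_s^α Ã^{1/2}u(s), ∂_s^{1+α} Ã^{1/2}u(s)⟩ ds ≥ (b/4)·sup_{s∈(0,t)} ‖∂_s^α Ã^{1/2}u(s)‖² − t^{2(1−α)} b ‖Ã^{1/2}u'(0)‖²/Γ(2−α)². -/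
open MeasureTheory Real Set

variable {H : Type*} [NormedAddCommGroup H] [NormedSpace ℝ H]

section AuxFrac
open intervalIntegral
variable {H : Type*} [NormedAddCommGroup H] [NormedSpace ℝ H]

lemma kerInt {θ : ℝ} (hθ : -1 < θ) {ρ s : ℝ} (h : ρ ≤ s) :
    ∫ r in ρ..s, (s - r) ^ θ = (s - ρ) ^ (θ + 1) / (θ + 1) := by
  rw [intervalIntegral.integral_comp_sub_left (fun x => x ^ θ) s, sub_self,
    integral_rpow (Or.inl hθ), Real.zero_rpow (by linarith : θ + 1 ≠ 0)]
  ring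

lemma kerInt' {θ : ℝ} (hθ : -1 < θ) {r s : ℝ} (h : r ≤ s) :
    ∫ σ in r..s, (σ - r) ^ θ = (s - r) ^ (θ + 1) / (θ + 1) := by
  rw [intervalIntegral.integral_comp_sub_right (fun x => x ^ θ) r, sub_self,
    integral_rpow (Or.inl hθ), Real.zero_rpow (by linarith : θ + 1 ≠ 0)]
  ring

lemma kerII {θ : ℝ} (hθ : -1 < θ) (s a b : ℝ) :
    IntervalIntegrable (fun r => (s - r) ^ θ) volume a b := by
  have := (intervalIntegrable_rpow' hθ (a := s - a) (b := s - b)).comp_sub_left s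
  simpa using this

lemma kerII' {θ : ℝ} (hθ : -1 < θ) (ρ a b : ℝ) :
    IntervalIntegrable (fun σ => (σ - ρ) ^ θ) volume a b := by
  have := (intervalIntegrable_rpow' hθ (a := a - ρ) (b := b - ρ)).comp_sub_right ρ
  simpa using this

lemma ker_meas {θ s : ℝ} : Measurable fun r : ℝ => (s - r) ^ θ := by
  have : Measurable fun r : ℝ => s - r := measurable_const.sub measurable_id
  measurability

lemma ker_meas' {θ ρ : ℝ} : Measurable fun σ : ℝ => (σ - ρ) ^ θ := by
  have : Measurable fun σ : ℝ => σ - ρ := measurable_id.sub measurable_const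
  measurability

lemma rpow_meas {θ : ℝ} : Measurable fun x : ℝ => x ^ θ := by
  simpa using (ker_meas' (θ := θ) (ρ := 0))

lemma kerSmulII {θ : ℝ} (hθ : -1 < θ) {f : ℝ → H} (hf : Continuous f) (s a b : ℝ) :
    IntervalIntegrable (fun r => (s - r) ^ θ • f r) volume a b := by
  obtain ⟨M, hM⟩ := (isCompact_uIcc (a := a) (b := b)).exists_bound_of_continuousOn
    hf.continuousOn
  refine IntervalIntegrable.mono_fun (((kerII hθ s a b).abs).mul_const M) ?_ ?_
  · exact (ker_meas.aestronglyMeasurable.smul hf.aestronglyMeasurable)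
  · refine (ae_restrict_iff' measurableSet_uIoc).2 (Filter.Eventually.of_forall fun r hr => ?_)
    have h1 : ‖f r‖ ≤ M := hM r (uIoc_subset_uIcc hr)
    show ‖(s - r) ^ θ • f r‖ ≤ ‖|(s - r) ^ θ| * M‖
    rw [norm_smul, Real.norm_eq_abs]
    calc |(s - r) ^ θ| * ‖f r‖ ≤ |(s - r) ^ θ| * M :=
          mul_le_mul_of_nonneg_left h1 (abs_nonneg _)
      _ ≤ ‖|(s - r) ^ θ| * M‖ := le_abs_self _

lemma aesmIf {k : ℝ × ℝ → ℝ} (hk : Measurable k) {f : ℝ → H} (hf : Continuous f)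
    (μ : Measure (ℝ × ℝ)) :
    AEStronglyMeasurable (fun p : ℝ × ℝ => if p.2 ≤ p.1 then k p • f p.2 else 0) μ := by
  have h1 : StronglyMeasurable (fun p : ℝ × ℝ => k p • f p.2) :=
    hk.stronglyMeasurable.smul (hf.comp continuous_snd).stronglyMeasurable
  have h2 : MeasurableSet {p : ℝ × ℝ | p.2 ≤ p.1} := measurableSet_le measurable_snd measurable_fst
  have : (fun p : ℝ × ℝ => if p.2 ≤ p.1 then k p • f p.2 else 0)
      = {p : ℝ × ℝ | p.2 ≤ p.1}.indicator (fun p => k p • f p.2) := by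
    funext p
    by_cases h : p.2 ≤ p.1 <;> simp [Set.indicator_apply, h]
  rw [this]
  exact (h1.indicator h2).aestronglyMeasurable

/-- triangle swap -/
lemma triangle_swap {G : ℝ → ℝ → H} {s : ℝ} (hs : 0 ≤ s)
    (hint : Integrable (fun p : ℝ × ℝ => if p.2 ≤ p.1 then G p.1 p.2 else 0)
      ((volume.restrict (Ioc 0 s)).prod (volume.restrict (Ioc 0 s)))) :
    ∫ r in (0:ℝ)..s, ∫ ρ in (0:ℝ)..r, G r ρ = ∫ ρ in (0:ℝ)..s, ∫ r in ρ..s, G r ρ := by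
  have key := MeasureTheory.integral_integral_swap (f := fun r ρ => if ρ ≤ r then G r ρ else 0)
    hint
  have L : ∫ r in (0:ℝ)..s, ∫ ρ in (0:ℝ)..r, G r ρ
      = ∫ r in Ioc (0:ℝ) s, ∫ ρ in Ioc (0:ℝ) s, (if ρ ≤ r then G r ρ else 0) := by
    rw [intervalIntegral.integral_of_le hs]
    refine setIntegral_congr_fun measurableSet_Ioc fun r hr => ?_
    have h1 : (fun ρ => if ρ ≤ r then G r ρ else 0) = (Iic r).indicator (fun ρ => G r ρ) := by
      funext ρ; by_cases h : ρ ≤ r <;> simp [Set.indicator_apply, h]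
    rw [h1, MeasureTheory.setIntegral_indicator measurableSet_Iic]
    have h2 : Ioc (0:ℝ) s ∩ Iic r = Ioc 0 r := by
      ext x; simp only [mem_inter_iff, mem_Ioc, mem_Iic]
      constructor
      · rintro ⟨⟨hx1, _⟩, hx3⟩; exact ⟨hx1, hx3⟩
      · rintro ⟨hx1, hx2⟩; exact ⟨⟨hx1, hx2.trans hr.2⟩, hx2⟩
    rw [h2, intervalIntegral.integral_of_le hr.1.le]
  have R : ∫ ρ in (0:ℝ)..s, ∫ r in ρ..s, G r ρ
      = ∫ ρ in Ioc (0:ℝ) s, ∫ r in Ioc (0:ℝ) s, (if ρ ≤ r then G r ρ else 0) := by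
    rw [intervalIntegral.integral_of_le hs]
    refine setIntegral_congr_fun measurableSet_Ioc fun ρ hρ => ?_
    have h1 : (fun r => if ρ ≤ r then G r ρ else 0) = (Ici ρ).indicator (fun r => G r ρ) := by
      funext r; by_cases h : ρ ≤ r <;> simp [Set.indicator_apply, h]
    rw [h1, MeasureTheory.setIntegral_indicator measurableSet_Ici]
    have h2 : Ioc (0:ℝ) s ∩ Ici ρ = Icc ρ s := by
      ext x; simp only [mem_inter_iff, mem_Ioc, mem_Icc, mem_Ici]
      constructor
      · rintro ⟨⟨_, hx2⟩, hx3⟩; exact ⟨hx3, hx2⟩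
      · rintro ⟨hx1, hx2⟩; exact ⟨⟨lt_of_lt_of_le hρ.1 hx1, hx2⟩, hx1⟩
    rw [h2, MeasureTheory.integral_Icc_eq_integral_Ioc,
      intervalIntegral.integral_of_le hρ.2]
  rw [L, R]
  exact key

lemma ker_meas2 {θ : ℝ} : Measurable fun p : ℝ × ℝ => (p.1 - p.2) ^ θ := by
  have : Measurable fun p : ℝ × ℝ => p.1 - p.2 := measurable_fst.sub measurable_snd
  measurability

lemma intProdI {β : ℝ} (hβ0 : 0 < β) {f : ℝ → H} (hf : Continuous f) {s : ℝ} (hs : 0 ≤ s) :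
    Integrable (fun p : ℝ × ℝ => if p.2 ≤ p.1 then (s - p.1) ^ (β - 1) • f p.2 else 0)
      ((volume.restrict (Ioc 0 s)).prod (volume.restrict (Ioc 0 s))) := by
  have hβ' : (-1:ℝ) < β - 1 := by linarith
  obtain ⟨M, hM⟩ := (isCompact_Icc (a := (0:ℝ)) (b := s)).exists_bound_of_continuousOn
    hf.continuousOn
  have hM0 : 0 ≤ M := le_trans (norm_nonneg _) (hM 0 (left_mem_Icc.2 hs))
  have hmeas : AEStronglyMeasurable
      (fun p : ℝ × ℝ => if p.2 ≤ p.1 then (s - p.1) ^ (β - 1) • f p.2 else 0)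
      ((volume.restrict (Ioc 0 s)).prod (volume.restrict (Ioc 0 s))) :=
    aesmIf (ker_meas.comp measurable_fst) hf _
  rw [MeasureTheory.integrable_prod_iff hmeas]
  constructor
  · refine Filter.Eventually.of_forall fun r => ?_
    have h1 : (fun ρ => if ρ ≤ r then (s - r) ^ (β - 1) • f ρ else 0)
        = (Iic r).indicator (fun ρ => (s - r) ^ (β - 1) • f ρ) := by
      funext ρ; by_cases h : ρ ≤ r <;> simp [Set.indicator_apply, h]
    rw [h1]
    exact ((hf.integrableOn_Ioc).smul ((s - r) ^ (β - 1))).indicator measurableSet_Iic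
  · have hg : Integrable (fun r => |(s - r) ^ (β - 1)| * (M * s))
        (volume.restrict (Ioc 0 s)) := by
      have := (kerII hβ' s 0 s).abs.mul_const (M * s)
      rw [intervalIntegrable_iff, uIoc_of_le hs] at this
      exact this
    refine Integrable.mono' hg (hmeas.norm.integral_prod_right') ?_
    refine (ae_restrict_iff' measurableSet_Ioc).2 (Filter.Eventually.of_forall fun r _ => ?_)
    have hb : ∀ᵐ ρ ∂(volume.restrict (Ioc (0:ℝ) s)),
        ‖if ρ ≤ r then (s - r) ^ (β - 1) • f ρ else 0‖ ≤ |(s - r) ^ (β - 1)| * M := by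
      refine (ae_restrict_iff' measurableSet_Ioc).2 (Filter.Eventually.of_forall fun ρ hρ => ?_)
      by_cases h : ρ ≤ r
      · simp only [h, if_true, norm_smul, Real.norm_eq_abs]
        exact mul_le_mul_of_nonneg_left (hM ρ ⟨hρ.1.le, hρ.2⟩) (abs_nonneg _)
      · simp only [h, if_false, norm_zero]
        positivity
    calc ‖∫ ρ in Ioc (0:ℝ) s, ‖if ρ ≤ r then (s - r) ^ (β - 1) • f ρ else 0‖‖
        = ∫ ρ in Ioc (0:ℝ) s, ‖if ρ ≤ r then (s - r) ^ (β - 1) • f ρ else 0‖ := by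
          rw [Real.norm_eq_abs, abs_of_nonneg (integral_nonneg fun ρ => norm_nonneg _)]
      _ ≤ ∫ _ρ in Ioc (0:ℝ) s, |(s - r) ^ (β - 1)| * M :=
          integral_mono_of_nonneg (Filter.Eventually.of_forall fun ρ => norm_nonneg _)
            (integrable_const _) hb
      _ ≤ |(s - r) ^ (β - 1)| * (M * s) := by
          rw [setIntegral_const, smul_eq_mul, Real.volume_real_Ioc_of_le hs, sub_zero]
          nlinarith [abs_nonneg ((s - r) ^ (β - 1))]

lemma intProdII {β : ℝ} (hβ0 : 0 < β) {f : ℝ → H} (hf : Continuous f) {s : ℝ} (hs : 0 ≤ s) :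
    Integrable (fun p : ℝ × ℝ => if p.2 ≤ p.1 then (p.1 - p.2) ^ (β - 1) • f p.2 else 0)
      ((volume.restrict (Ioc 0 s)).prod (volume.restrict (Ioc 0 s))) := by
  have hβ' : (-1:ℝ) < β - 1 := by linarith
  obtain ⟨M, hM⟩ := (isCompact_Icc (a := (0:ℝ)) (b := s)).exists_bound_of_continuousOn
    hf.continuousOn
  have hM0 : 0 ≤ M := le_trans (norm_nonneg _) (hM 0 (left_mem_Icc.2 hs))
  have hmeas : AEStronglyMeasurable
      (fun p : ℝ × ℝ => if p.2 ≤ p.1 then (p.1 - p.2) ^ (β - 1) • f p.2 else 0)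
      ((volume.restrict (Ioc 0 s)).prod (volume.restrict (Ioc 0 s))) :=
    aesmIf ker_meas2 hf _
  rw [MeasureTheory.integrable_prod_iff hmeas]
  constructor
  · refine Filter.Eventually.of_forall fun σ => ?_
    have h1 : (fun ρ => if ρ ≤ σ then (σ - ρ) ^ (β - 1) • f ρ else 0)
        = (Iic σ).indicator (fun ρ => (σ - ρ) ^ (β - 1) • f ρ) := by
      funext ρ; by_cases h : ρ ≤ σ <;> simp [Set.indicator_apply, h]
    rw [h1]
    have h2 : IntegrableOn (fun ρ => (σ - ρ) ^ (β - 1) • f ρ) (Ioc 0 s) volume := by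
      have := kerSmulII hβ' hf σ 0 s
      rw [intervalIntegrable_iff, uIoc_of_le hs] at this
      exact this
    exact h2.indicator measurableSet_Iic
  · refine Integrable.mono' (integrable_const (M * (s ^ β / β)))
      (hmeas.norm.integral_prod_right') ?_
    refine (ae_restrict_iff' measurableSet_Ioc).2 (Filter.Eventually.of_forall fun σ hσ => ?_)
    have hker : IntegrableOn (fun ρ => (Iic σ).indicator (fun ρ => (σ - ρ) ^ (β - 1)) ρ * M)
        (Ioc 0 s) volume := by
      have h3 : IntegrableOn (fun ρ => (σ - ρ) ^ (β - 1)) (Ioc 0 s) volume := by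
        have := kerII hβ' σ 0 s
        rw [intervalIntegrable_iff, uIoc_of_le hs] at this
        exact this
      exact (h3.indicator measurableSet_Iic).mul_const M
    have hb : ∀ᵐ ρ ∂(volume.restrict (Ioc (0:ℝ) s)),
        ‖if ρ ≤ σ then (σ - ρ) ^ (β - 1) • f ρ else 0‖
          ≤ (Iic σ).indicator (fun ρ => (σ - ρ) ^ (β - 1)) ρ * M := by
      refine (ae_restrict_iff' measurableSet_Ioc).2 (Filter.Eventually.of_forall fun ρ hρ => ?_)
      by_cases h : ρ ≤ σ
      · simp only [h, if_true, norm_smul, Real.norm_eq_abs, Set.indicator_apply, mem_Iic]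
        rw [abs_of_nonneg (Real.rpow_nonneg (by linarith) _)]
        exact mul_le_mul_of_nonneg_left (hM ρ ⟨hρ.1.le, hρ.2⟩)
          (Real.rpow_nonneg (by linarith) _)
      · simp [h, Set.indicator_apply]
    calc ‖∫ ρ in Ioc (0:ℝ) s, ‖if ρ ≤ σ then (σ - ρ) ^ (β - 1) • f ρ else 0‖‖
        = ∫ ρ in Ioc (0:ℝ) s, ‖if ρ ≤ σ then (σ - ρ) ^ (β - 1) • f ρ else 0‖ := by
          rw [Real.norm_eq_abs, abs_of_nonneg (integral_nonneg fun ρ => norm_nonneg _)]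
      _ ≤ ∫ ρ in Ioc (0:ℝ) s, (Iic σ).indicator (fun ρ => (σ - ρ) ^ (β - 1)) ρ * M :=
          integral_mono_of_nonneg (Filter.Eventually.of_forall fun ρ => norm_nonneg _) hker hb
      _ = (∫ ρ in Ioc (0:ℝ) s ∩ Iic σ, (σ - ρ) ^ (β - 1)) * M := by
          rw [← MeasureTheory.setIntegral_indicator measurableSet_Iic,
            MeasureTheory.integral_mul_const]
      _ ≤ M * (s ^ β / β) := by
          have h4 : Ioc (0:ℝ) s ∩ Iic σ = Ioc 0 σ := by
            ext x; simp only [mem_inter_iff, mem_Ioc, mem_Iic]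
            exact ⟨fun hx => ⟨hx.1.1, hx.2⟩, fun hx => ⟨⟨hx.1, hx.2.trans hσ.2⟩, hx.2⟩⟩
          rw [h4, ← intervalIntegral.integral_of_le hσ.1.le, kerInt hβ' hσ.1.le]
          have h5 : σ ^ (β - 1 + 1) ≤ s ^ (β - 1 + 1) :=
            Real.rpow_le_rpow hσ.1.le hσ.2 (by linarith)
          rw [sub_zero]
          have hβpos : (0:ℝ) < β - 1 + 1 := by linarith
          calc (σ ^ (β - 1 + 1)) / (β - 1 + 1) * M ≤ (s ^ (β - 1 + 1)) / (β - 1 + 1) * M := by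
                gcongr
            _ = M * (s ^ β / β) := by rw [show β - 1 + 1 = β by ring]; ring

variable [CompleteSpace H]

/-- Representation: `J_β(g)(s) = (s^β/β) • g 0 + β⁻¹ • J_{β+1}(g')(s)`. -/
lemma rep_lemma {β : ℝ} (hβ0 : 0 < β) {g : ℝ → H} (hg : ContDiff ℝ 1 g) {s : ℝ} (hs : 0 ≤ s) :
    ∫ r in (0:ℝ)..s, (s - r) ^ (β - 1) • g r
      = (s ^ β / β) • g 0 + β⁻¹ • ∫ r in (0:ℝ)..s, (s - r) ^ β • deriv g r := by
  have hβ' : (-1:ℝ) < β - 1 := by linarith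
  have hβ'' : (-1:ℝ) < β := by linarith
  have hgc : Continuous g := hg.continuous
  have hg' : Continuous (deriv g) := hg.continuous_deriv le_rfl
  have hdiff : Differentiable ℝ g := hg.differentiable one_ne_zero
  have key : ∀ r : ℝ, g r = g 0 + ∫ ρ in (0:ℝ)..r, deriv g ρ := by
    intro r
    rw [intervalIntegral.integral_deriv_eq_sub (fun x _ => hdiff x)
      (hg'.intervalIntegrable _ _)]
    abel
  have step1 : ∫ r in (0:ℝ)..s, (s - r) ^ (β - 1) • g r
      = (∫ r in (0:ℝ)..s, (s - r) ^ (β - 1) • g 0)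
        + ∫ r in (0:ℝ)..s, (s - r) ^ (β - 1) • (g r - g 0) := by
    rw [← intervalIntegral.integral_add
      (kerSmulII hβ' (continuous_const : Continuous fun _ : ℝ => g 0) s 0 s)
      (kerSmulII hβ' (f := fun r => g r - g 0) (hgc.sub continuous_const) s 0 s)]
    congr 1
    funext r
    rw [← smul_add]
    congr 1
    abel
  rw [step1]
  have A : (∫ r in (0:ℝ)..s, (s - r) ^ (β - 1) • g 0) = (s ^ β / β) • g 0 := by
    rw [intervalIntegral.integral_smul_const, kerInt hβ' hs, sub_zero,
      show β - 1 + 1 = β by ring]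
  have B : ∫ r in (0:ℝ)..s, (s - r) ^ (β - 1) • (g r - g 0)
      = β⁻¹ • ∫ r in (0:ℝ)..s, (s - r) ^ β • deriv g r := by
    have e1 : ∀ r ∈ uIcc (0:ℝ) s, (s - r) ^ (β - 1) • (g r - g 0)
        = ∫ ρ in (0:ℝ)..r, (s - r) ^ (β - 1) • deriv g ρ := by
      intro r _
      rw [intervalIntegral.integral_smul, ← intervalIntegral.integral_deriv_eq_sub
        (fun x _ => hdiff x) (hg'.intervalIntegrable _ _)]
    rw [intervalIntegral.integral_congr e1]
    rw [triangle_swap hs (intProdI hβ0 hg' hs)]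
    have e2 : ∀ ρ ∈ uIcc (0:ℝ) s, (∫ r in ρ..s, (s - r) ^ (β - 1) • deriv g ρ)
        = β⁻¹ • ((s - ρ) ^ β • deriv g ρ) := by
      intro ρ hρ
      rw [uIcc_of_le hs] at hρ
      rw [intervalIntegral.integral_smul_const, kerInt hβ' hρ.2,
        show β - 1 + 1 = β by ring, div_eq_inv_mul, mul_smul]
    rw [intervalIntegral.integral_congr e2, intervalIntegral.integral_smul]
  rw [A, B]

/-- Fubini: `∫₀^s J_{β}(f) = β⁻¹ J_{β+1}(f)(s)` (exponent form `β-1` inside). -/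
lemma fubini2 {β : ℝ} (hβ0 : 0 < β) {f : ℝ → H} (hf : Continuous f) {s : ℝ} (hs : 0 ≤ s) :
    ∫ σ in (0:ℝ)..s, (∫ r in (0:ℝ)..σ, (σ - r) ^ (β - 1) • f r)
      = β⁻¹ • ∫ r in (0:ℝ)..s, (s - r) ^ β • f r := by
  have hβ' : (-1:ℝ) < β - 1 := by linarith
  rw [triangle_swap hs (intProdII hβ0 hf hs)]
  have e2 : ∀ r ∈ uIcc (0:ℝ) s, (∫ σ in r..s, (σ - r) ^ (β - 1) • f r)
      = β⁻¹ • ((s - r) ^ β • f r) := by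
    intro r hr
    rw [uIcc_of_le hs] at hr
    rw [intervalIntegral.integral_smul_const, kerInt' hβ' hr.2,
      show β - 1 + 1 = β by ring, div_eq_inv_mul, mul_smul]
  rw [intervalIntegral.integral_congr e2, intervalIntegral.integral_smul]

/-- Continuity of `s ↦ J_{θ+1} f s` for `θ > 0`. -/
lemma contJ {θ : ℝ} (hθ : 0 < θ) {f : ℝ → H} (hf : Continuous f) :
    Continuous fun s => ∫ r in (0:ℝ)..s, (s - r) ^ θ • f r := by
  have hk : Continuous fun x : ℝ => x ^ θ := by
    rw [continuous_iff_continuousAt]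
    exact fun x => Real.continuousAt_rpow_const x θ (Or.inr hθ.le)
  have hF : Continuous (Function.uncurry fun (s r : ℝ) => (s - r) ^ θ • f r) :=
    ((hk.comp (continuous_fst.sub continuous_snd)).smul (hf.comp continuous_snd))
  exact intervalIntegral.continuous_parametric_intervalIntegral_of_continuous hF continuous_id

/-- Derivative of `K(σ) = ∫₀^σ (σ-r)^β • f r dr` for `0 < β`. -/
lemma deriv_J {β : ℝ} (hβ0 : 0 < β) {f : ℝ → H} (hf : ContDiff ℝ 1 f) {s : ℝ} (hs : 0 < s) :
    HasDerivAt (fun σ => ∫ r in (0:ℝ)..σ, (σ - r) ^ β • f r)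
      (β • ∫ r in (0:ℝ)..s, (s - r) ^ (β - 1) • f r) s := by
  have hβ' : (-1:ℝ) < β - 1 := by linarith
  set Ψ : ℝ → H := fun σ => ∫ r in (0:ℝ)..σ, (σ - r) ^ (β - 1) • f r with hΨ
  set Ψrep : ℝ → H := fun σ =>
    (σ ^ β / β) • f 0 + β⁻¹ • ∫ r in (0:ℝ)..σ, (σ - r) ^ β • deriv f r with hΨrep
  have hrepeq : ∀ σ : ℝ, 0 ≤ σ → Ψ σ = Ψrep σ := fun σ hσ => rep_lemma hβ0 hf hσ
  have hΨrepCont : Continuous Ψrep := by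
    have h1 : Continuous fun σ : ℝ => σ ^ β := by
      rw [continuous_iff_continuousAt]
      exact fun x => Real.continuousAt_rpow_const x β (Or.inr hβ0.le)
    exact ((h1.div_const β).smul continuous_const).add
      (continuous_const.smul (contJ hβ0 (hf.continuous_deriv le_rfl)))
  -- FTC-1 for the primitive of Ψ
  have hII : IntervalIntegrable Ψ volume 0 s := by
    rw [intervalIntegrable_iff, uIoc_of_le hs.le]
    exact ((hΨrepCont.integrableOn_Ioc).congr_fun
      (fun σ hσ => (hrepeq σ hσ.1.le).symm) measurableSet_Ioc)
  have hsm : StronglyMeasurableAtFilter Ψ (nhds s) volume := by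
    refine ⟨Ioi 0, Ioi_mem_nhds hs, ?_⟩
    exact hΨrepCont.aestronglyMeasurable.congr
      ((ae_restrict_iff' measurableSet_Ioi).2
        (Filter.Eventually.of_forall fun σ hσ => (hrepeq σ (le_of_lt hσ)).symm))
  have hca : ContinuousAt Ψ s := by
    refine hΨrepCont.continuousAt.congr ?_
    refine Filter.eventuallyEq_of_mem (Ioi_mem_nhds hs) fun σ hσ => ?_
    exact (hrepeq σ (le_of_lt hσ)).symm
  have hprim : HasDerivAt (fun σ => ∫ τ in (0:ℝ)..σ, Ψ τ) (Ψ s) s :=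
    intervalIntegral.integral_hasDerivAt_right hII hsm hca
  have hKder : HasDerivAt (fun σ => β • ∫ τ in (0:ℝ)..σ, Ψ τ) (β • Ψ s) s :=
    hprim.const_smul β
  have heq : (fun σ => ∫ r in (0:ℝ)..σ, (σ - r) ^ β • f r)
      =ᶠ[nhds s] (fun σ => β • ∫ τ in (0:ℝ)..σ, Ψ τ) := by
    refine Filter.eventuallyEq_of_mem (Ioi_mem_nhds hs) fun σ hσ => ?_
    have h6 := fubini2 hβ0 hf.continuous (le_of_lt hσ)
    rw [← hΨ] at h6
    rw [h6, smul_inv_smul₀ (ne_of_gt hβ0)]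
  exact hKder.congr_of_eventuallyEq heq
end AuxFrac


set_option maxHeartbeats 2000000 in
open scoped RealInnerProductSpace in
/-- Lower bound for the `k_* = K` damping term: for `b > 0`, `α ∈ (0,1)` and `u` with
`∂_t^α Ã^{1/2}u(0) = 0`,
`sup_{t'∈(0,t)} ∫₀^{t'} ⟨b ∂_s^α Ã^{1/2}u, ∂_s^{1+α} Ã^{1/2}u⟩ ds
 ≥ (b/4) sup_{s∈(0,t)} ‖∂_s^α Ã^{1/2}u(s)‖² − t^{2(1-α)} b ‖Ã^{1/2}u'(0)‖²/Γ(2-α)²`. -/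
theorem damping_term_lower_bound {H : Type*} [NormedAddCommGroup H]
    [InnerProductSpace ℝ H] [CompleteSpace H]
    (b α t : ℝ) (hb : 0 < b) (hα : α ∈ Set.Ioo (0:ℝ) 1) (ht : 0 < t)
    (S : H →L[ℝ] H) (u : ℝ → H) (hu : ContDiff ℝ 3 u)
    (h0 : capv α (fun s => S (u s)) 0 = 0) :
    (b/4) * (⨆ s ∈ Set.Ioo (0:ℝ) t, ‖capv α (fun σ => S (u σ)) s‖^2)
        - t^(2*(1-α)) * b * ‖S (deriv u 0)‖^2 / (Real.Gamma (2-α))^2 ≤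
      ⨆ t' ∈ Set.Ioo (0:ℝ) t, ∫ s in (0:ℝ)..t',
        ⟪b • capv α (fun σ => S (u σ)) s, capv (1+α) (fun σ => S (u σ)) s⟫ := by
  classical
  obtain ⟨hα0, hα1⟩ := hα
  have hβ0 : (0:ℝ) < 1 - α := by linarith
  set β : ℝ := 1 - α with hβdef
  have hβ' : (-1:ℝ) < β - 1 := by simp only [hβdef]; linarith
  set w : ℝ → H := fun σ => S (u σ) with hwdef
  have hw3 : ContDiff ℝ 3 w := S.contDiff.comp hu
  set f₁ : ℝ → H := deriv w with hf₁def
  set f₂ : ℝ → H := deriv f₁ with hf₂def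
  have hw3' : ContDiff ℝ ((2:WithTop ℕ∞)+1) w := by
    convert hw3 using 2 <;> norm_num
  have hf₁ : ContDiff ℝ 2 f₁ := (contDiff_succ_iff_deriv.1 hw3').2.2
  have hf₁' : ContDiff ℝ ((1:WithTop ℕ∞)+1) f₁ := by
    convert hf₁ using 2 <;> norm_num
  have hf₂ : ContDiff ℝ 1 f₂ := (contDiff_succ_iff_deriv.1 hf₁').2.2
  have hf₁c : Continuous f₁ := hf₁.continuous
  have hf₂c : Continuous f₂ := hf₂.continuous
  set γ : ℝ := Real.Gamma β with hγdef
  have hγ0 : 0 < γ := Real.Gamma_pos_of_pos hβ0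
  set Γ' : ℝ := Real.Gamma (β+1) with hΓ'def
  have hΓ' : Γ' = β * γ := Real.Gamma_add_one (ne_of_gt hβ0)
  have hΓ'0 : 0 < Γ' := by rw [hΓ']; positivity
  set v := capv α w with hvdef
  set D := capv (1+α) w with hDdef
  -- unfolding capv
  have hceil : (⌈α⌉ : ℤ) = 1 := by
    rw [Int.ceil_eq_iff]
    constructor <;> push_cast <;> linarith
  have hceil2 : (⌈1+α⌉ : ℤ) = 2 := by
    rw [add_comm, Int.ceil_add_one, hceil]; norm_num
  have hv : ∀ s : ℝ, v s = γ⁻¹ • ∫ r in (0:ℝ)..s, ((s - r) ^ (β-1)) • f₁ r := by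
    intro s
    have hne : ¬(α = ((⌈α⌉:ℤ):ℝ)) := by rw [hceil]; push_cast; linarith
    rw [hvdef, capv, if_neg hne, hceil]
    simp only [RLv, Int.toNat_one, Function.iterate_one, Int.cast_one]
    rfl
  have hD : ∀ s : ℝ, D s = γ⁻¹ • ∫ r in (0:ℝ)..s, ((s - r) ^ (β-1)) • f₂ r := by
    intro s
    have hne : ¬(1+α = ((⌈1+α⌉:ℤ):ℝ)) := by rw [hceil2]; push_cast; linarith
    rw [hDdef, capv, if_neg hne, hceil2]
    have h2 : deriv^[(2:ℤ).toNat] w = f₂ := by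
      show deriv^[2] w = f₂
      rw [show (2:ℕ) = 1+1 from rfl, Function.iterate_succ_apply', Function.iterate_one]
    rw [h2]
    simp only [RLv, Int.cast_two]
    rw [hγdef, hβdef]
    have e2 : (2:ℝ) - (1+α) = 1 - α := by ring
    rw [e2]
  set c₁ : H := f₁ 0 with hc₁def
  have hc₁ : c₁ = S (deriv u 0) := by
    have hud : HasDerivAt u (deriv u 0) 0 :=
      ((hu.differentiable (by norm_num)) 0).hasDerivAt
    have hcomp : HasDerivAt w (S (deriv u 0)) 0 := S.hasFDerivAt.comp_hasDerivAt 0 hud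
    rw [hc₁def, hf₁def, hcomp.deriv]
  set Kv : ℝ → H := fun s => ∫ r in (0:ℝ)..s, ((s - r) ^ β) • f₂ r with hKvdef
  set vrep : ℝ → H := fun s => Γ'⁻¹ • (s ^ β • c₁ + Kv s) with hvrepdef
  have hvrep : ∀ s : ℝ, 0 ≤ s → v s = vrep s := by
    intro s hs
    rw [hv s, rep_lemma hβ0 (hf₁.of_le (by norm_num)) hs]
    simp only [hvrepdef, hKvdef, hc₁def, hf₂def]
    rw [smul_add, smul_add, smul_smul, smul_smul, smul_smul]
    have hβne : β ≠ 0 := ne_of_gt hβ0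
    congr 1
    · congr 1
      rw [hΓ', mul_inv]
      field_simp
    · congr 1
      rw [hΓ', mul_inv]
      ring
  have hvrepc : Continuous vrep := by
    have h1 : Continuous fun s : ℝ => s ^ β := by
      rw [continuous_iff_continuousAt]
      exact fun x => Real.continuousAt_rpow_const x β (Or.inr hβ0.le)
    exact continuous_const.smul ((h1.smul continuous_const).add (contJ hβ0 hf₂c))
  have hv0 : v 0 = 0 := by
    rw [hv 0, intervalIntegral.integral_same, smul_zero]
  have hvc : ContinuousOn v (Ici 0) :=
    hvrepc.continuousOn.congr fun s hs => hvrep s hs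
  set Ψ : ℝ → H := fun s => ∫ r in (0:ℝ)..s, ((s - r) ^ (β-1)) • f₂ r with hΨdef
  set Ψrep : ℝ → H := fun s =>
    (s ^ β / β) • f₂ 0 + β⁻¹ • ∫ r in (0:ℝ)..s, ((s - r) ^ β) • deriv f₂ r with hΨrepdef
  have hΨrepeq : ∀ s : ℝ, 0 ≤ s → Ψ s = Ψrep s := fun s hs => rep_lemma hβ0 hf₂ hs
  have hΨrepc : Continuous Ψrep := by
    have h1 : Continuous fun s : ℝ => s ^ β := by
      rw [continuous_iff_continuousAt]
      exact fun x => Real.continuousAt_rpow_const x β (Or.inr hβ0.le)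
    exact ((h1.div_const β).smul continuous_const).add
      (continuous_const.smul (contJ hβ0 (hf₂.continuous_deriv le_rfl)))
  have hDc : ContinuousOn D (Ici 0) := by
    have : ContinuousOn (fun s => γ⁻¹ • Ψrep s) (Ici 0) :=
      (continuous_const.smul hΨrepc).continuousOn
    refine this.congr fun s hs => ?_
    have h := hΨrepeq s hs
    simp only [hΨdef] at h
    rw [hD s, h]
  set V' : ℝ → H := fun s => (γ⁻¹ * s ^ (β - 1)) • c₁ + D s with hV'def
  have hvder : ∀ s : ℝ, 0 < s → HasDerivAt v (V' s) s := by
    intro s hs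
    have hKder : HasDerivAt Kv (β • Ψ s) s := deriv_J hβ0 hf₂ hs
    have hpow : HasDerivAt (fun σ : ℝ => σ ^ β) (β * s ^ (β - 1)) s :=
      Real.hasDerivAt_rpow_const (Or.inl (ne_of_gt hs))
    have h1 : HasDerivAt vrep (Γ'⁻¹ • ((β * s ^ (β-1)) • c₁ + β • Ψ s)) s :=
      (((hpow.smul_const c₁).add hKder).const_smul Γ'⁻¹)
    have h2 : Γ'⁻¹ • ((β * s ^ (β-1)) • c₁ + β • Ψ s) = V' s := by
      simp only [hV'def, hΨdef]
      rw [hD s]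
      rw [smul_add, smul_smul, smul_smul, hΓ']
      have hβne : β ≠ 0 := ne_of_gt hβ0
      congr 1
      · congr 1
        rw [mul_inv]
        field_simp
      · congr 1
        rw [mul_inv]
        field_simp
    rw [h2] at h1
    refine h1.congr_of_eventuallyEq ?_
    exact Filter.eventuallyEq_of_mem (Ioi_mem_nhds hs) fun σ hσ => hvrep σ (le_of_lt hσ)
  -- bound on v
  obtain ⟨Mv, hMv⟩ := (isCompact_Icc (a := (0:ℝ)) (b := t)).exists_bound_of_continuousOn
    hvrepc.continuousOn
  have hMv' : ∀ s ∈ Icc (0:ℝ) t, ‖v s‖ ≤ Mv := fun s hs => by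
    rw [hvrep s hs.1]; exact hMv s hs
  -- the supremum A
  set A : ℝ := ⨆ s ∈ Set.Ioo (0:ℝ) t, ‖v s‖^2 with hAdef
  have hval : ∀ s : ℝ, (⨆ (_ : s ∈ Ioo (0:ℝ) t), ‖v s‖^2)
      = if s ∈ Ioo (0:ℝ) t then ‖v s‖^2 else 0 := by
    intro s
    by_cases h : s ∈ Ioo (0:ℝ) t
    · rw [if_pos h, ciSup_pos h]
    · rw [if_neg h]
      haveI : IsEmpty (s ∈ Ioo (0:ℝ) t) := ⟨h⟩
      exact Real.iSup_of_isEmpty _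
  have hBddA : BddAbove (range fun s => ⨆ (_ : s ∈ Ioo (0:ℝ) t), ‖v s‖^2) := by
    refine ⟨max (Mv^2) 0, ?_⟩
    rintro x ⟨s, rfl⟩
    show (⨆ (_ : s ∈ Ioo (0:ℝ) t), ‖v s‖^2) ≤ max (Mv^2) 0
    rw [hval s]
    by_cases h : s ∈ Ioo (0:ℝ) t
    · rw [if_pos h]
      refine le_max_of_le_left ?_
      have := hMv' s ⟨h.1.le, h.2.le⟩
      nlinarith [norm_nonneg (v s)]
    · rw [if_neg h]; exact le_max_right _ _
  have hAub : ∀ s ∈ Ioo (0:ℝ) t, ‖v s‖^2 ≤ A := by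
    intro s hs
    calc ‖v s‖^2 = ⨆ (_ : s ∈ Ioo (0:ℝ) t), ‖v s‖^2 :=
          (ciSup_pos (f := fun _ : s ∈ Ioo (0:ℝ) t => ‖v s‖^2) hs).symm
      _ ≤ A := le_ciSup hBddA s
  have hA0 : 0 ≤ A := le_trans (by positivity) (hAub (t/2) ⟨by linarith, by linarith⟩)
  have hsA : ∀ s ∈ Icc (0:ℝ) t, s ≠ t → ‖v s‖ ≤ Real.sqrt A := by
    intro s hs hst
    rcases eq_or_lt_of_le hs.1 with h0 | h0
    · rw [← h0, hv0, norm_zero]; exact Real.sqrt_nonneg A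
    · have : s ∈ Ioo (0:ℝ) t := ⟨h0, lt_of_le_of_ne hs.2 hst⟩
      rw [show ‖v s‖ = ‖v s‖ from rfl]
      exact (Real.le_sqrt (norm_nonneg _) hA0).2 (hAub s this)
  -- interval integrability of the inner-product pieces
  have hMv0 : 0 ≤ Mv := le_trans (norm_nonneg _) (hMv 0 ⟨le_rfl, ht.le⟩)
  have hIP2 : ∀ t' ∈ Ioo (0:ℝ) t, IntervalIntegrable
      (fun s => (inner ℝ (v s) (D s) : ℝ)) volume 0 t' := by
    intro t' ht'
    apply ContinuousOn.intervalIntegrable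
    have hsub2 : uIcc (0:ℝ) t' ⊆ Ici 0 := by
      rw [uIcc_of_le ht'.1.le]; exact fun s hs => hs.1
    exact (hvc.mono hsub2).inner (hDc.mono hsub2)
  have hIP1 : ∀ t' ∈ Ioo (0:ℝ) t, IntervalIntegrable
      (fun s => s ^ (β-1) * (inner ℝ (v s) c₁ : ℝ)) volume 0 t' := by
    intro t' ht'
    refine IntervalIntegrable.mono_fun
      ((intervalIntegral.intervalIntegrable_rpow' (by linarith : (-1:ℝ) < β - 1)).mul_const (Mv * ‖c₁‖)) ?_ ?_
    · rw [uIoc_of_le ht'.1.le]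
      refine (rpow_meas.aestronglyMeasurable).mul ?_
      have hcont : ContinuousOn (fun s => (inner ℝ (v s) c₁ : ℝ)) (Ioc 0 t') :=
        (hvc.mono (fun s hs => le_of_lt hs.1)).inner continuousOn_const
      exact hcont.aestronglyMeasurable measurableSet_Ioc
    · rw [uIoc_of_le ht'.1.le]
      refine (ae_restrict_iff' measurableSet_Ioc).2 (Filter.Eventually.of_forall fun s hs => ?_)
      show ‖s ^ (β-1) * (inner ℝ (v s) c₁ : ℝ)‖ ≤ ‖s ^ (β-1) * (Mv * ‖c₁‖)‖
      have h1 : |(inner ℝ (v s) c₁ : ℝ)| ≤ Mv * ‖c₁‖ := by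
        refine le_trans (abs_real_inner_le_norm _ _) ?_
        exact mul_le_mul_of_nonneg_right (hMv' s ⟨hs.1.le, hs.2.trans ht'.2.le⟩) (norm_nonneg _)
      rw [Real.norm_eq_abs, Real.norm_eq_abs, abs_mul, abs_mul,
        abs_of_nonneg (Real.rpow_nonneg hs.1.le _)]
      refine mul_le_mul_of_nonneg_left (le_trans h1 (le_abs_self _))
        (Real.rpow_nonneg hs.1.le _)
  -- FTC: the main integral identity
  have hFTC : ∀ t' ∈ Ioo (0:ℝ) t, ∫ s in (0:ℝ)..t',
      (2 * (γ⁻¹ * (s ^ (β-1) * inner ℝ (v s) c₁) + inner ℝ (v s) (D s)) : ℝ) = ‖v t'‖^2 := by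
    intro t' ht'
    have hcont : ContinuousOn (fun s => (inner ℝ (v s) (v s) : ℝ)) (Icc 0 t') := by
      have hsub2 : Icc (0:ℝ) t' ⊆ Ici 0 := fun s hs => hs.1
      exact (hvc.mono hsub2).inner (hvc.mono hsub2)
    have hderiv : ∀ x ∈ Ioo (0:ℝ) t', HasDerivWithinAt (fun s => (inner ℝ (v s) (v s) : ℝ))
        (2 * (γ⁻¹ * (x ^ (β-1) * inner ℝ (v x) c₁) + inner ℝ (v x) (D x))) (Ioi x) x := by
      intro x hx
      have h1 := (hvder x hx.1).inner ℝ (hvder x hx.1)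
      have h2 : (inner ℝ (v x) (V' x) + inner ℝ (V' x) (v x) : ℝ)
          = 2 * (γ⁻¹ * (x ^ (β-1) * inner ℝ (v x) c₁) + inner ℝ (v x) (D x)) := by
        simp only [hV'def, inner_add_right, inner_add_left, real_inner_smul_right,
          real_inner_smul_left]
        rw [real_inner_comm (D x) (v x), real_inner_comm c₁ (v x)]
        ring
      have h3 := h1.hasDerivWithinAt (s := Ioi x)
      rw [h2] at h3
      exact h3
    have hint : IntervalIntegrable
        (fun s => (2 * (γ⁻¹ * (s ^ (β-1) * inner ℝ (v s) c₁) + inner ℝ (v s) (D s)) : ℝ))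
        volume 0 t' :=
      (((hIP1 t' ht').const_mul γ⁻¹).add (hIP2 t' ht')).const_mul 2
    calc ∫ s in (0:ℝ)..t',
        (2 * (γ⁻¹ * (s ^ (β-1) * inner ℝ (v s) c₁) + inner ℝ (v s) (D s)) : ℝ)
        = (inner ℝ (v t') (v t') : ℝ) - inner ℝ (v 0) (v 0) :=
          intervalIntegral.integral_eq_sub_of_hasDeriv_right_of_le ht'.1.le hcont hderiv hint
      _ = ‖v t'‖^2 := by
          rw [hv0, inner_zero_left, sub_zero, real_inner_self_eq_norm_sq]
  -- per-t' lower bound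
  have hsqA : Real.sqrt A * Real.sqrt A = A := Real.mul_self_sqrt hA0
  set Eg : ℝ := b * (‖c₁‖ * t ^ β / Γ')^2 with hEgdef
  have hlow : ∀ t' ∈ Ioo (0:ℝ) t,
      b/2 * ‖v t'‖^2 - (b/4) * A - Eg
        ≤ ∫ s in (0:ℝ)..t', (inner ℝ (b • v s) (D s) : ℝ) := by
    intro t' ht'
    have e1 : ∀ s, (inner ℝ (b • v s) (D s) : ℝ)
        = b * 2⁻¹ * (2 * (γ⁻¹ * (s ^ (β-1) * inner ℝ (v s) c₁) + inner ℝ (v s) (D s)))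
            - b * γ⁻¹ * (s ^ (β-1) * inner ℝ (v s) c₁) := by
      intro s
      rw [real_inner_smul_left]
      ring
    rw [intervalIntegral.integral_congr (g := fun s =>
        b * 2⁻¹ * (2 * (γ⁻¹ * (s ^ (β-1) * inner ℝ (v s) c₁) + inner ℝ (v s) (D s)))
            - b * γ⁻¹ * (s ^ (β-1) * inner ℝ (v s) c₁)) (fun s _ => e1 s)]
    have hint2 : IntervalIntegrable
        (fun s => (2 * (γ⁻¹ * (s ^ (β-1) * inner ℝ (v s) c₁) + inner ℝ (v s) (D s)) : ℝ))
        volume 0 t' :=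
      (((hIP1 t' ht').const_mul γ⁻¹).add (hIP2 t' ht')).const_mul 2
    have hI1 : ∫ s in (0:ℝ)..t',
        (b * 2⁻¹ * (2 * (γ⁻¹ * (s ^ (β-1) * inner ℝ (v s) c₁) + inner ℝ (v s) (D s))) : ℝ)
        = b * 2⁻¹ * ‖v t'‖^2 := by
      rw [intervalIntegral.integral_const_mul, hFTC t' ht']
    have hI2 : ∫ s in (0:ℝ)..t', (b * γ⁻¹ * (s ^ (β-1) * inner ℝ (v s) c₁) : ℝ)
        = b * γ⁻¹ * ∫ s in (0:ℝ)..t', s ^ (β-1) * (inner ℝ (v s) c₁ : ℝ) := by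
      rw [intervalIntegral.integral_const_mul]
    rw [intervalIntegral.integral_sub
      (hint2.const_mul (b * 2⁻¹)) ((hIP1 t' ht').const_mul (b * γ⁻¹)), hI1, hI2]
    -- bound the error integral
    have hEb : ∫ s in (0:ℝ)..t', s ^ (β-1) * (inner ℝ (v s) c₁ : ℝ)
        ≤ Real.sqrt A * ‖c₁‖ * (t ^ β / β) := by
      calc ∫ s in (0:ℝ)..t', s ^ (β-1) * (inner ℝ (v s) c₁ : ℝ)
          ≤ ∫ s in (0:ℝ)..t', s ^ (β-1) * (Real.sqrt A * ‖c₁‖) := by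
            refine intervalIntegral.integral_mono_on ht'.1.le (hIP1 t' ht')
              ((intervalIntegral.intervalIntegrable_rpow' (by linarith : (-1:ℝ) < β - 1)).mul_const _) ?_
            intro s hs
            refine mul_le_mul_of_nonneg_left ?_ (Real.rpow_nonneg hs.1 _)
            calc (inner ℝ (v s) c₁ : ℝ) ≤ ‖v s‖ * ‖c₁‖ := real_inner_le_norm _ _
              _ ≤ Real.sqrt A * ‖c₁‖ :=
                  mul_le_mul_of_nonneg_right
                    (hsA s ⟨hs.1, hs.2.trans ht'.2.le⟩ (hs.2.trans_lt ht'.2).ne)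
                    (norm_nonneg _)
        _ = (∫ s in (0:ℝ)..t', s ^ (β-1)) * (Real.sqrt A * ‖c₁‖) :=
            intervalIntegral.integral_mul_const _ _
        _ ≤ (t ^ β / β) * (Real.sqrt A * ‖c₁‖) := by
            rw [integral_rpow (Or.inl (by linarith : (-1:ℝ) < β - 1)),
              Real.zero_rpow (by linarith : β - 1 + 1 ≠ 0), sub_zero]
            have h5 : t' ^ (β-1+1) ≤ t ^ (β-1+1) :=
              Real.rpow_le_rpow ht'.1.le ht'.2.le (by linarith)
            have h6 : t' ^ (β-1+1) / (β-1+1) ≤ t ^ β / β := by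
              rw [show β - 1 + 1 = β by ring] at h5 ⊢
              exact (div_le_div_iff_of_pos_right hβ0).2 h5
            refine mul_le_mul_of_nonneg_right h6 (by positivity)
        _ = Real.sqrt A * ‖c₁‖ * (t ^ β / β) := by ring
    have h3 : γ⁻¹ * ∫ s in (0:ℝ)..t', s ^ (β-1) * (inner ℝ (v s) c₁ : ℝ)
        ≤ Real.sqrt A * (‖c₁‖ * t ^ β / Γ') := by
      have h4 := mul_le_mul_of_nonneg_left hEb (le_of_lt (inv_pos.2 hγ0))
      refine le_trans h4 (le_of_eq ?_)
      rw [hΓ']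
      field_simp
    have hYoung : Real.sqrt A * (‖c₁‖ * t ^ β / Γ') ≤ A/4 + (‖c₁‖ * t ^ β / Γ')^2 := by
      have hsq := sq_nonneg (Real.sqrt A / 2 - ‖c₁‖ * t ^ β / Γ')
      have h2 : (Real.sqrt A / 2 - ‖c₁‖ * t ^ β / Γ')^2
          = Real.sqrt A * Real.sqrt A / 4 - Real.sqrt A * (‖c₁‖ * t ^ β / Γ')
            + (‖c₁‖ * t ^ β / Γ')^2 := by ring
      rw [h2, hsqA] at hsq
      linarith
    have h7 := mul_le_mul_of_nonneg_left (h3.trans hYoung) hb.le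
    have h9 : b * (A/4 + (‖c₁‖ * t ^ β / Γ')^2) = (b/4) * A + Eg := by
      rw [hEgdef]; ring
    linarith [h7, h9]
  -- supremum over t' of the damping integral
  have hsubt : Icc (0:ℝ) t ⊆ Ici 0 := fun s hs => hs.1
  have hDint : ContinuousOn (fun s => (inner ℝ (b • v s) (D s) : ℝ)) (Icc 0 t) :=
    ((hvc.mono hsubt).const_smul b).inner (hDc.mono hsubt)
  obtain ⟨C₀, hC₀⟩ := (isCompact_Icc (a := (0:ℝ)) (b := t)).exists_bound_of_continuousOn hDint
  have hC₀0 : 0 ≤ C₀ := le_trans (norm_nonneg _) (hC₀ 0 ⟨le_rfl, ht.le⟩)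
  have hFb : ∀ t' ∈ Ioo (0:ℝ) t,
      (∫ s in (0:ℝ)..t', (inner ℝ (b • v s) (D s) : ℝ)) ≤ C₀ * t := by
    intro t' ht'
    have h1 : ‖∫ s in (0:ℝ)..t', (inner ℝ (b • v s) (D s) : ℝ)‖ ≤ C₀ * |t' - 0| := by
      refine intervalIntegral.norm_integral_le_of_norm_le_const fun x hx => ?_
      rw [uIoc_of_le ht'.1.le] at hx
      exact hC₀ x ⟨hx.1.le, hx.2.trans ht'.2.le⟩
    rw [Real.norm_eq_abs] at h1
    have h2 : |t' - 0| ≤ t := by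
      rw [sub_zero, abs_of_pos ht'.1]; exact ht'.2.le
    calc (∫ s in (0:ℝ)..t', (inner ℝ (b • v s) (D s) : ℝ))
        ≤ |∫ s in (0:ℝ)..t', (inner ℝ (b • v s) (D s) : ℝ)| := le_abs_self _
      _ ≤ C₀ * |t' - 0| := h1
      _ ≤ C₀ * t := mul_le_mul_of_nonneg_left h2 hC₀0
  set B : ℝ := ⨆ t' ∈ Set.Ioo (0:ℝ) t, ∫ s in (0:ℝ)..t', (inner ℝ (b • v s) (D s) : ℝ)
    with hBdef
  have hvalB : ∀ t' : ℝ,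
      (⨆ (_ : t' ∈ Ioo (0:ℝ) t), ∫ s in (0:ℝ)..t', (inner ℝ (b • v s) (D s) : ℝ))
      = if t' ∈ Ioo (0:ℝ) t then ∫ s in (0:ℝ)..t', (inner ℝ (b • v s) (D s) : ℝ) else 0 := by
    intro t'
    by_cases h : t' ∈ Ioo (0:ℝ) t
    · rw [if_pos h, ciSup_pos h]
    · rw [if_neg h]
      haveI : IsEmpty (t' ∈ Ioo (0:ℝ) t) := ⟨h⟩
      exact Real.iSup_of_isEmpty _
  have hBddB : BddAbove (range fun t' =>
      ⨆ (_ : t' ∈ Ioo (0:ℝ) t), ∫ s in (0:ℝ)..t', (inner ℝ (b • v s) (D s) : ℝ)) := by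
    refine ⟨max (C₀ * t) 0, ?_⟩
    rintro x ⟨t', rfl⟩
    show (⨆ (_ : t' ∈ Ioo (0:ℝ) t), ∫ s in (0:ℝ)..t', (inner ℝ (b • v s) (D s) : ℝ))
      ≤ max (C₀ * t) 0
    rw [hvalB t']
    by_cases h : t' ∈ Ioo (0:ℝ) t
    · rw [if_pos h]; exact le_max_of_le_left (hFb t' h)
    · rw [if_neg h]; exact le_max_right _ _
  have hBub : ∀ t' ∈ Ioo (0:ℝ) t,
      (∫ s in (0:ℝ)..t', (inner ℝ (b • v s) (D s) : ℝ)) ≤ B := by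
    intro t' ht'
    calc (∫ s in (0:ℝ)..t', (inner ℝ (b • v s) (D s) : ℝ))
        = ⨆ (_ : t' ∈ Ioo (0:ℝ) t), ∫ s in (0:ℝ)..t', (inner ℝ (b • v s) (D s) : ℝ) :=
          (ciSup_pos (f := fun _ : t' ∈ Ioo (0:ℝ) t =>
            ∫ s in (0:ℝ)..t', (inner ℝ (b • v s) (D s) : ℝ)) ht').symm
      _ ≤ B := le_ciSup hBddB t'
  have hmain : ∀ s ∈ Ioo (0:ℝ) t, b/2 * ‖v s‖^2 ≤ B + (b/4)*A + Eg := by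
    intro s hs
    linarith [hlow s hs, hBub s hs]
  have hS0 : 0 ≤ B + (b/4)*A + Eg := by
    have h1 := hmain (t/2) ⟨half_pos ht, half_lt_self ht⟩
    have h2 : 0 ≤ b/2 * ‖v (t/2)‖^2 := by positivity
    linarith
  have hR0 : 0 ≤ (2/b) * (B + (b/4)*A + Eg) :=
    mul_nonneg (div_nonneg (by norm_num) hb.le) hS0
  have hbne : b ≠ 0 := ne_of_gt hb
  have hAR : A ≤ (2/b) * (B + (b/4)*A + Eg) := by
    have hgoal : (⨆ s ∈ Set.Ioo (0:ℝ) t, ‖v s‖^2) ≤ (2/b) * (B + (b/4)*A + Eg) := by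
      refine Real.iSup_le (fun s => Real.iSup_le (fun hs => ?_) hR0) hR0
      have h1 := hmain s hs
      calc ‖v s‖^2 = (2/b) * (b/2 * ‖v s‖^2) := by field_simp
        _ ≤ (2/b) * (B + (b/4)*A + Eg) :=
            mul_le_mul_of_nonneg_left h1 (div_nonneg (by norm_num) hb.le)
    calc A = ⨆ s ∈ Set.Ioo (0:ℝ) t, ‖v s‖^2 := hAdef
      _ ≤ (2/b) * (B + (b/4)*A + Eg) := hgoal
  have hfinal : (b/4)*A - Eg ≤ B := by
    have h1 := mul_le_mul_of_nonneg_left hAR (le_of_lt (half_pos hb))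
    have h2 : (b/2) * ((2/b) * (B + (b/4)*A + Eg)) = B + (b/4)*A + Eg := by
      field_simp
    rw [h2] at h1
    linarith
  have hEgoal : t ^ (2*β) * b * ‖S (deriv u 0)‖^2 / Real.Gamma (2-α)^2 = Eg := by
    rw [hEgdef, ← hc₁]
    rw [show (2:ℝ) - α = β + 1 by rw [hβdef]; ring]
    rw [← hΓ'def]
    rw [show (2:ℝ)*β = β*2 by ring, Real.rpow_mul ht.le]
    rw [show ((2:ℝ) : ℝ) = ((2:ℕ) : ℝ) by norm_num, Real.rpow_natCast]
    field_simp
  rw [hEgoal]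
  exact hfinal
end
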